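/- Let x₁,…,xₙ be positive reals with arithmetic mean x̄ and geometric mean Ḡ = (x₁⋯xₙ)^{1/n}, a = min xᵢ, b = max xᵢ, S² = (1/n)∑(xᵢ-x̄)². Define h(x;x̄) = (-log x + log x̄)/(x-x̄)² + 1/(x̄(x-x̄)). Then exp(S² h(b;x̄)) ≤ x̄/Ḡ ≤ exp(S² h(a;x̄)), where h(x̄;x̄) is interpreted as the limit 1/(2x̄²). -/

import Mathlib

open Finset Set

noncomputable def psi (t : ℝ) : ℝ := (t - 1 - Real.log t) / (t - 1) ^ 2

lemma k_hasDeriv (t : ℝ) (ht : 0 < t) :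
    HasDerivAt (fun s => Real.log s - (s - 1) + (s - 1) ^ 2 / 2) ((t - 1) ^ 2 / t) t := by
  have h1 := (Real.hasDerivAt_log (ne_of_gt ht)).sub ((hasDerivAt_id t).sub_const 1)
  have h2 := ((((hasDerivAt_id t).sub_const 1)).pow 2).div_const 2
  have h := h1.add h2
  refine h.congr_deriv ?_
  simp only [id_eq]
  field_simp
  ring

lemma k_mono : MonotoneOn (fun s => Real.log s - (s - 1) + (s - 1) ^ 2 / 2) (Set.Ioi (0:ℝ)) := by
  apply monotoneOn_of_deriv_nonneg (convex_Ioi 0)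
  · exact fun t ht => ((k_hasDeriv t ht).continuousAt).continuousWithinAt
  · intro t ht
    rw [interior_Ioi] at ht
    exact (k_hasDeriv t ht).differentiableAt.differentiableWithinAt
  · intro t ht
    rw [interior_Ioi] at ht
    have ht' : (0:ℝ) < t := ht
    rw [(k_hasDeriv t ht').deriv]
    positivity

lemma N_hasDeriv (t : ℝ) (ht : 0 < t) :
    HasDerivAt (fun s => 1 / s - s + 2 * Real.log s) (-((t-1)^2 / t^2)) t := by
  have h1 : HasDerivAt (fun s : ℝ => 1 / s) (-(1/t^2)) t := by
    simpa using (hasDerivAt_inv (ne_of_gt ht))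
  have h := (h1.sub (hasDerivAt_id t)).add ((Real.hasDerivAt_log (ne_of_gt ht)).const_mul 2)
  refine h.congr_deriv ?_
  field_simp
  ring

lemma N_anti : AntitoneOn (fun s => 1 / s - s + 2 * Real.log s) (Set.Ioi (0:ℝ)) := by
  apply antitoneOn_of_deriv_nonpos (convex_Ioi 0)
  · exact fun t ht => ((N_hasDeriv t ht).continuousAt).continuousWithinAt
  · intro t ht
    rw [interior_Ioi] at ht
    exact (N_hasDeriv t ht).differentiableAt.differentiableWithinAt
  · intro t ht
    rw [interior_Ioi] at ht
    rw [(N_hasDeriv t ht).deriv]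
    have : (0:ℝ) ≤ (t-1)^2 / t^2 := by positivity
    linarith

lemma psi_hasDeriv (t : ℝ) (ht : 0 < t) (ht1 : t ≠ 1) :
    HasDerivAt psi ((t - 1) * (1 / t - t + 2 * Real.log t) / ((t-1)^2)^2) t := by
  have hu : HasDerivAt (fun s => s - 1 - Real.log s) (1 - 1/t) t :=
    ((hasDerivAt_id t).sub_const 1).sub (by simpa using Real.hasDerivAt_log (ne_of_gt ht))
  have hv : HasDerivAt (fun s : ℝ => (s - 1) ^ 2) (2 * (t - 1)) t := by
    have := (((hasDerivAt_id t).sub_const 1)).pow 2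
    simpa [Pi.pow_def] using this
  have hvne : (t - 1) ^ 2 ≠ 0 := pow_ne_zero 2 (sub_ne_zero.mpr ht1)
  have h := hu.div hv hvne
  refine h.congr_deriv ?_
  field_simp
  ring

lemma psi_deriv_nonpos (t : ℝ) (ht : 0 < t) (ht1 : t ≠ 1) :
    deriv psi t ≤ 0 := by
  rw [(psi_hasDeriv t ht ht1).deriv]
  have hN : (t - 1) * (1 / t - t + 2 * Real.log t) ≤ 0 := by
    rcases lt_or_gt_of_ne ht1 with h | h
    · have h0 : (fun s => 1 / s - s + 2 * Real.log s) 1 ≤ (fun s => 1 / s - s + 2 * Real.log s) t :=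
        N_anti (Set.mem_Ioi.mpr ht) (Set.mem_Ioi.mpr one_pos) h.le
    /- N t ≥ N 1 = 0, t - 1 < 0 -/
      simp only [Real.log_one] at h0
      have : (0:ℝ) ≤ 1 / t - t + 2 * Real.log t := by rw [one_div]; norm_num at h0; linarith
      nlinarith
    · have h0 : (fun s => 1 / s - s + 2 * Real.log s) t ≤ (fun s => 1 / s - s + 2 * Real.log s) 1 :=
        N_anti (Set.mem_Ioi.mpr one_pos) (Set.mem_Ioi.mpr ht) h.le
      simp only [Real.log_one] at h0
      have : 1 / t - t + 2 * Real.log t ≤ 0 := by rw [one_div]; norm_num at h0; linarith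
      nlinarith
  have hd : (0:ℝ) < ((t-1)^2)^2 := by
    have : t - 1 ≠ 0 := sub_ne_zero.mpr ht1
    positivity
  exact div_nonpos_of_nonpos_of_nonneg hN hd.le

lemma psi_anti_Ioo : AntitoneOn psi (Set.Ioo (0:ℝ) 1) := by
  apply antitoneOn_of_deriv_nonpos (convex_Ioo 0 1)
  · exact fun t ht => (psi_hasDeriv t ht.1 (ne_of_lt ht.2)).continuousAt.continuousWithinAt
  · intro t ht
    rw [interior_Ioo] at ht
    exact (psi_hasDeriv t ht.1 (ne_of_lt ht.2)).differentiableAt.differentiableWithinAt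
  · intro t ht
    rw [interior_Ioo] at ht
    exact psi_deriv_nonpos t ht.1 (ne_of_lt ht.2)

lemma psi_anti_Ioi : AntitoneOn psi (Set.Ioi (1:ℝ)) := by
  apply antitoneOn_of_deriv_nonpos (convex_Ioi 1)
  · exact fun t ht =>
      (psi_hasDeriv t (lt_trans one_pos ht) (ne_of_gt ht)).continuousAt.continuousWithinAt
  · intro t ht
    rw [interior_Ioi] at ht
    exact (psi_hasDeriv t (lt_trans one_pos ht) (ne_of_gt ht)).differentiableAt.differentiableWithinAt
  · intro t ht
    rw [interior_Ioi] at ht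
    exact psi_deriv_nonpos t (lt_trans one_pos ht) (ne_of_gt ht)

lemma k_sign (t : ℝ) (ht : 0 < t) :
    (t ≤ 1 → Real.log t - (t - 1) + (t - 1) ^ 2 / 2 ≤ 0) ∧
    (1 ≤ t → 0 ≤ Real.log t - (t - 1) + (t - 1) ^ 2 / 2) := by
  constructor
  · intro h
    have := k_mono (Set.mem_Ioi.mpr ht) (Set.mem_Ioi.mpr one_pos) h
    simpa using this
  · intro h
    have := k_mono (Set.mem_Ioi.mpr one_pos) (Set.mem_Ioi.mpr ht) h
    simpa using this

lemma psi_ge_half (u : ℝ) (hu : 0 < u) (hu1 : u < 1) : 1 / 2 ≤ psi u := by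
  have hk := (k_sign u hu).1 hu1.le
  have hd : (0:ℝ) < (u - 1) ^ 2 := by
    have : u - 1 ≠ 0 := by intro h; apply absurd hu1; linarith [sub_eq_zero.mp h]
    positivity
  rw [psi, le_div_iff₀ hd]
  nlinarith

lemma psi_le_half (v : ℝ) (hv1 : 1 < v) : psi v ≤ 1 / 2 := by
  have hk := (k_sign v (lt_trans one_pos hv1)).2 hv1.le
  have hd : (0:ℝ) < (v - 1) ^ 2 := by
    have : v - 1 ≠ 0 := by intro h; linarith [sub_eq_zero.mp h]
    positivity
  rw [psi, div_le_iff₀ hd]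
  nlinarith

lemma psi_anti (u v : ℝ) (hu : 0 < u) (huv : u ≤ v) (hu1 : u ≠ 1) (hv1 : v ≠ 1) :
    psi v ≤ psi u := by
  rcases lt_or_gt_of_ne hu1 with h1 | h1
  · rcases lt_or_gt_of_ne hv1 with h2 | h2
    · exact psi_anti_Ioo ⟨hu, h1⟩ ⟨lt_of_lt_of_le hu huv, h2⟩ huv
    · exact le_trans (psi_le_half v h2) (psi_ge_half u hu h1)
  · have h2 : 1 < v := lt_of_lt_of_le h1 huv
    exact psi_anti_Ioi h1 h2 huv

noncomputable def hfun (c x : ℝ) : ℝ :=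
  (-Real.log x + Real.log c) / (x - c) ^ 2 + 1 / (c * (x - c))

lemma hfun_eq (c x : ℝ) (hc : 0 < c) (hx : 0 < x) (hxc : x ≠ c) :
    hfun c x = psi (x / c) / c ^ 2 := by
  have hlog : Real.log (x / c) = Real.log x - Real.log c := Real.log_div hx.ne' hc.ne'
  have hd : x - c ≠ 0 := sub_ne_zero.mpr hxc
  rw [hfun, psi, hlog]
  field_simp
  ring

lemma key_middle (c x : ℝ) (hc : 0 < c) (hx : 0 < x) (hxc : x ≠ c) :
    Real.log c - Real.log x + (x - c) / c = (x - c) ^ 2 * hfun c x := by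
  have hd : x - c ≠ 0 := sub_ne_zero.mpr hxc
  rw [hfun]
  field_simp
  ring

lemma key (c aa bb x : ℝ) (hc : 0 < c) (ha0 : 0 < aa) (hx : 0 < x)
    (hax : aa ≤ x) (hxb : x ≤ bb) (hac : aa ≠ c) (hbc : bb ≠ c) :
    (x - c) ^ 2 * hfun c bb ≤ Real.log c - Real.log x + (x - c) / c ∧
    Real.log c - Real.log x + (x - c) / c ≤ (x - c) ^ 2 * hfun c aa := by
  have hb0 : 0 < bb := lt_of_lt_of_le (lt_of_lt_of_le ha0 hax) hxb
  by_cases hxc : x = c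
  · subst hxc
    simp
  · rw [key_middle c x hc hx hxc, hfun_eq c bb hc hb0 hbc, hfun_eq c aa hc ha0 hac,
      hfun_eq c x hc hx hxc]
    have hsq : (0:ℝ) ≤ (x - c) ^ 2 := sq_nonneg _
    have hc2 : (0:ℝ) < c ^ 2 := by positivity
    have hne1 : x / c ≠ 1 := by
      intro h
      exact hxc (by field_simp at h; linarith)
    have hane1 : aa / c ≠ 1 := by
      intro h
      exact hac (by field_simp at h; linarith)
    have hbne1 : bb / c ≠ 1 := by
      intro h
      exact hbc (by field_simp at h; linarith)
    have h1 : psi (bb / c) ≤ psi (x / c) :=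
      psi_anti (x / c) (bb / c) (by positivity) (div_le_div_of_nonneg_right hxb hc.le) hne1 hbne1
    have h2 : psi (x / c) ≤ psi (aa / c) :=
      psi_anti (aa / c) (x / c) (by positivity) (div_le_div_of_nonneg_right hax hc.le) hane1 hne1
    constructor
    · exact mul_le_mul_of_nonneg_left (div_le_div_of_nonneg_right h1 hc2.le) hsq
    · exact mul_le_mul_of_nonneg_left (div_le_div_of_nonneg_right h2 hc2.le) hsq

/-- Sharpened AM-GM: for positive data (not all equal), with
`h(x;x̄) = (-log x + log x̄)/(x-x̄)² + 1/(x̄(x-x̄))`,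
`exp(S² h(b;x̄)) ≤ x̄/Ḡ ≤ exp(S² h(a;x̄))`. -/
theorem stmt_12 (n : ℕ) (hn : 0 < n) (x : Fin n → ℝ) (hx : ∀ i, 0 < x i)
    (a b : ℝ) (ha : IsLeast (Set.range x) a) (hb : IsGreatest (Set.range x) b)
    (hne : ∃ i j, x i ≠ x j)
    (xbar G S2 : ℝ)
    (hxbar : xbar = (∑ i, x i) / n)
    (hG : G = (∏ i, x i) ^ ((1 : ℝ) / n))
    (hS2 : S2 = (∑ i, (x i - xbar) ^ 2) / n) :
    Real.exp (S2 * ((-Real.log b + Real.log xbar) / (b - xbar) ^ 2 +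
        1 / (xbar * (b - xbar)))) ≤ xbar / G ∧
      xbar / G ≤ Real.exp (S2 * ((-Real.log a + Real.log xbar) / (a - xbar) ^ 2 +
        1 / (xbar * (a - xbar)))) := by
  obtain ⟨i0, hi0⟩ := ha.1
  obtain ⟨j0, hj0⟩ := hb.1
  have ha_le : ∀ i, a ≤ x i := fun i => ha.2 ⟨i, rfl⟩
  have hb_ge : ∀ i, x i ≤ b := fun i => hb.2 ⟨i, rfl⟩
  have ha0 : 0 < a := hi0 ▸ hx i0
  have hn' : (0:ℝ) < n := Nat.cast_pos.mpr hn
  have hne' : (Finset.univ : Finset (Fin n)).Nonempty := by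
    simpa [Finset.univ_nonempty_iff] using Fin.pos_iff_nonempty.mp hn
  have hsum_pos : 0 < ∑ i, x i := Finset.sum_pos (fun i _ => hx i) hne'
  have hc : 0 < xbar := hxbar ▸ div_pos hsum_pos hn'
  obtain ⟨i1, j1, hij⟩ := hne
  have hlta : ∃ i, a < x i := by
    rcases eq_or_lt_of_le (ha_le i1) with h | h
    · exact ⟨j1, lt_of_le_of_ne (ha_le j1) (fun e => hij (by rw [← h, ← e]))⟩
    · exact ⟨i1, h⟩
  have hltb : ∃ i, x i < b := by
    rcases eq_or_lt_of_le (hb_ge i1) with h | h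
    · exact ⟨j1, lt_of_le_of_ne (hb_ge j1) (fun e => hij (by rw [h, e]))⟩
    · exact ⟨i1, h⟩
  have hsx : ∑ i, x i = n * xbar := by rw [hxbar]; field_simp
  have hac : a < xbar := by
    rw [hxbar, lt_div_iff₀ hn']
    obtain ⟨i2, h2⟩ := hlta
    have := Finset.sum_lt_sum (f := fun _ : Fin n => a) (g := x)
      (fun i _ => ha_le i) ⟨i2, Finset.mem_univ _, h2⟩
    simpa [Finset.sum_const, Finset.card_univ, mul_comm] using this
  have hcb : xbar < b := by
    rw [hxbar, div_lt_iff₀ hn']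
    obtain ⟨i2, h2⟩ := hltb
    have := Finset.sum_lt_sum (f := x) (g := fun _ : Fin n => b)
      (fun i _ => hb_ge i) ⟨i2, Finset.mem_univ _, h2⟩
    simpa [Finset.sum_const, Finset.card_univ, mul_comm] using this
  have hacne : a ≠ xbar := ne_of_lt hac
  have hbcne : b ≠ xbar := ne_of_gt hcb
  have hprod_pos : 0 < ∏ i, x i := Finset.prod_pos (fun i _ => hx i)
  have hGpos : 0 < G := hG ▸ Real.rpow_pos_of_pos hprod_pos _
  have hlogG : Real.log G = (∑ i, Real.log (x i)) / n := by
    rw [hG, Real.log_rpow hprod_pos, Real.log_prod (fun i _ => (hx i).ne')]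
    ring
  have hsumsq : ∑ i, (x i - xbar) ^ 2 = n * S2 := by rw [hS2]; field_simp
  have hsum_eq : ∑ i, (Real.log xbar - Real.log (x i) + (x i - xbar) / xbar)
      = n * (Real.log xbar - Real.log G) := by
    have h1 : ∑ i, (x i - xbar) = 0 := by
      rw [Finset.sum_sub_distrib, Finset.sum_const, Finset.card_univ, Fintype.card_fin,
        nsmul_eq_mul, hsx]
      ring
    rw [Finset.sum_add_distrib, Finset.sum_sub_distrib, Finset.sum_const, Finset.card_univ,
      Fintype.card_fin, nsmul_eq_mul, ← Finset.sum_div, h1, hlogG]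
    field_simp
    ring
  have hkey : ∀ i : Fin n,
      (x i - xbar) ^ 2 * hfun xbar b ≤
        Real.log xbar - Real.log (x i) + (x i - xbar) / xbar ∧
      Real.log xbar - Real.log (x i) + (x i - xbar) / xbar ≤
        (x i - xbar) ^ 2 * hfun xbar a :=
    fun i => key xbar a b (x i) hc ha0 (hx i) (ha_le i) (hb_ge i) hacne hbcne
  have hL : (n : ℝ) * S2 * hfun xbar b ≤ n * (Real.log xbar - Real.log G) := by
    rw [← hsum_eq, ← hsumsq, Finset.sum_mul]
    exact Finset.sum_le_sum fun i _ => (hkey i).1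
  have hR : (n : ℝ) * (Real.log xbar - Real.log G) ≤ n * S2 * hfun xbar a := by
    rw [← hsum_eq, ← hsumsq, Finset.sum_mul]
    exact Finset.sum_le_sum fun i _ => (hkey i).2
  have hL' : S2 * hfun xbar b ≤ Real.log xbar - Real.log G := by
    have := (mul_le_mul_iff_right₀ hn').mp (by linarith [hL] : (n:ℝ) * (S2 * hfun xbar b) ≤ n * (Real.log xbar - Real.log G))
    exact this
  have hR' : Real.log xbar - Real.log G ≤ S2 * hfun xbar a := by
    have := (mul_le_mul_iff_right₀ hn').mp (by linarith [hR] : (n:ℝ) * (Real.log xbar - Real.log G) ≤ n * (S2 * hfun xbar a))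
    exact this
  have hlogdiv : Real.log xbar - Real.log G = Real.log (xbar / G) :=
    (Real.log_div hc.ne' hGpos.ne').symm
  have hexp : Real.exp (Real.log (xbar / G)) = xbar / G :=
    Real.exp_log (div_pos hc hGpos)
  constructor
  · calc Real.exp (S2 * ((-Real.log b + Real.log xbar) / (b - xbar) ^ 2 +
        1 / (xbar * (b - xbar)))) = Real.exp (S2 * hfun xbar b) := rfl
      _ ≤ Real.exp (Real.log (xbar / G)) := Real.exp_le_exp.mpr (hlogdiv ▸ hL')
      _ = xbar / G := hexp
  · calc xbar / G = Real.exp (Real.log (xbar / G)) := hexp.symm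
      _ ≤ Real.exp (S2 * hfun xbar a) := Real.exp_le_exp.mpr (hlogdiv ▸ hR')
      _ = _ := rfl
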